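/- Let X be a quasiprojective scheme over a field k (i.e., a locally closed subscheme of some projective space ℙⁿ_k). Then every finite set of closed points of X admits a common affine open neighborhood. -/

import Mathlib

open AlgebraicGeometry

attribute [local instance] MvPolynomial.gradedAlgebra

section Avoidance

variable {R A : Type*} [CommRing R] [CommRing A] [Algebra R A]
variable (𝒜 : ℕ → Submodule R A) [GradedAlgebra 𝒜]

lemma exists_homogeneous_mem_not_mem {I q : Ideal A} (hI : I.IsHomogeneous 𝒜)
    (h : ¬ I ≤ q) : ∃ (d : ℕ) (a : A), a ∈ 𝒜 d ∧ a ∈ I ∧ a ∉ q := by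
  classical
  obtain ⟨x, hxI, hxq⟩ := Set.not_subset.mp h
  by_contra hc
  push_neg at hc
  apply hxq
  rw [← DirectSum.sum_support_decompose 𝒜 x]
  exact Ideal.sum_mem q fun i _ => hc i _ (SetLike.coe_mem _) (hI i hxI)

lemma exists_homogeneous_mem_inter {I : Ideal A} (hI : I.IsHomogeneous 𝒜)
    {q : Ideal A} (hq : q.IsPrime) (hIq : ¬ I ≤ q) (S : Finset (Ideal A))
    (hhom : ∀ p ∈ S, p.IsHomogeneous 𝒜) (hnle : ∀ p ∈ S, ¬ p ≤ q) :
    ∃ (e : ℕ) (g : A), g ∈ 𝒜 e ∧ g ∈ I ∧ (∀ p ∈ S, g ∈ p) ∧ g ∉ q := by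
  classical
  induction S using Finset.induction with
  | empty =>
    obtain ⟨d, a, h1, h2, h3⟩ := exists_homogeneous_mem_not_mem 𝒜 hI hIq
    exact ⟨d, a, h1, h2, by simp, h3⟩
  | @insert p S' hp IH =>
    obtain ⟨e, g, hg1, hg2, hg3, hg4⟩ := IH (fun p' h' => hhom p' (Finset.mem_insert_of_mem h'))
      (fun p' h' => hnle p' (Finset.mem_insert_of_mem h'))
    obtain ⟨d, a, ha1, ha2, ha3⟩ := exists_homogeneous_mem_not_mem 𝒜
      (hhom p (Finset.mem_insert_self p S')) (hnle p (Finset.mem_insert_self p S'))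
    refine ⟨e + d, g * a, SetLike.mul_mem_graded hg1 ha1, Ideal.mul_mem_right a I hg2, ?_, ?_⟩
    · intro p' h'
      rcases Finset.mem_insert.mp h' with rfl | h'
      · exact Ideal.mul_mem_left p' g ha2
      · exact Ideal.mul_mem_right a p' (hg3 p' h')
    · intro hmem
      rcases hq.mem_or_mem hmem with h | h
      exacts [hg4 h, ha3 h]

lemma homogeneous_prime_avoidance {I : Ideal A} (hI : I.IsHomogeneous 𝒜)
    (hIirr : I ≤ (HomogeneousIdeal.irrelevant 𝒜).toIdeal)
    (S : Finset (Ideal A)) :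
    S.Nonempty → (∀ p ∈ S, p.IsPrime) → (∀ p ∈ S, p.IsHomogeneous 𝒜) →
    (∀ p ∈ S, ¬ I ≤ p) →
    ∃ (d : ℕ) (f : A), 0 < d ∧ f ∈ 𝒜 d ∧ f ∈ I ∧ ∀ p ∈ S, f ∉ p := by
  classical
  have pos : ∀ {d : ℕ} {a : A} {q : Ideal A}, a ∈ 𝒜 d → a ∈ I → a ∉ q → 0 < d := by
    intro d a q h1 h2 h3
    rcases Nat.eq_zero_or_pos d with rfl | h
    · exfalso
      have h4 : GradedRing.proj 𝒜 0 a = 0 := hIirr h2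
      rw [GradedRing.proj_apply, DirectSum.decompose_of_mem_same 𝒜 h1] at h4
      exact h3 (h4 ▸ q.zero_mem)
    · exact h
  induction S using Finset.strongInduction with
  | _ S IH =>
  intro hS hprime hhom hnle
  obtain ⟨q, hqS, hqmin⟩ := S.exists_minimal hS
  have hq : q.IsPrime := hprime q hqS
  by_cases hS1 : S.erase q = ∅
  · obtain ⟨d, a, h1, h2, h3⟩ := exists_homogeneous_mem_not_mem 𝒜 hI (hnle q hqS)
    refine ⟨d, a, pos h1 h2 h3, h1, h2, fun p hp => ?_⟩
    rcases eq_or_ne p q with rfl | hne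
    · exact h3
    · exact absurd (Finset.mem_erase.mpr ⟨hne, hp⟩) (by simp [hS1])
  · obtain ⟨d, f, hd, hf1, hf2, hf3⟩ := IH (S.erase q) (Finset.erase_ssubset hqS)
      (Finset.nonempty_iff_ne_empty.mpr hS1)
      (fun p hp => hprime p (Finset.mem_of_mem_erase hp))
      (fun p hp => hhom p (Finset.mem_of_mem_erase hp))
      (fun p hp => hnle p (Finset.mem_of_mem_erase hp))
    by_cases hfq : f ∉ q
    · refine ⟨d, f, hd, hf1, hf2, fun p hp => ?_⟩
      rcases eq_or_ne p q with rfl | hne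
      · exact hfq
      · exact hf3 p (Finset.mem_erase.mpr ⟨hne, hp⟩)
    · push_neg at hfq
      obtain ⟨e, g, hg1, hg2, hg3, hg4⟩ := exists_homogeneous_mem_inter 𝒜 hI hq (hnle q hqS)
        (S.erase q) (fun p hp => hhom p (Finset.mem_of_mem_erase hp))
        (fun p hp hle => (Finset.mem_erase.mp hp).1
          (le_antisymm hle (hqmin (Finset.mem_of_mem_erase hp) hle)))
      have he : 0 < e := pos hg1 hg2 hg4
      refine ⟨d * e, f ^ e + g ^ d, Nat.mul_pos hd he, ?_, ?_, ?_⟩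
      · refine Submodule.add_mem _ ?_ ?_
        · have := SetLike.pow_mem_graded e hf1
          rwa [smul_eq_mul, mul_comm] at this
        · have := SetLike.pow_mem_graded d hg1
          rwa [smul_eq_mul] at this
      · exact Ideal.add_mem _ (I.pow_mem_of_mem hf2 e he) (I.pow_mem_of_mem hg2 d hd)
      · intro p hp hmem
        rcases eq_or_ne p q with rfl | hne
        · have h1 : f ^ e ∈ p := p.pow_mem_of_mem hfq e he
          have h2 : g ^ d ∈ p := by
            have := p.sub_mem hmem h1
            simpa using this
          exact hg4 (hq.mem_of_pow_mem d h2)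
        · have hp' := Finset.mem_erase.mpr ⟨hne, hp⟩
          have h2 : g ^ d ∈ p := p.pow_mem_of_mem (hg3 p hp') d hd
          have h1 : f ^ e ∈ p := by
            have := p.sub_mem hmem h2
            simpa using this
          exact hf3 p hp' ((hprime p hp).mem_of_pow_mem e h1)

end Avoidance

/-- Let `X` be a quasiprojective scheme over a field `k`, i.e. `X`
admits an immersion (locally closed embedding) into some projective space
`ℙⁿ_k = Proj k[X₀, …, Xₙ]`.  Then every finite set of closed points of `X` admits
a common affine open neighborhood. -/
theorem quasiprojective_finite_set_has_affine_neighborhood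
    (k : Type) [Field k] (X : Scheme) (n : ℕ)
    (g : X ⟶ Proj (MvPolynomial.homogeneousSubmodule (Fin (n + 1)) k))
    [IsImmersion g]
    (s : Finset X) (hs : ∀ x ∈ s, IsClosed ({x} : Set X)) :
    ∃ U : X.Opens, IsAffineOpen U ∧ (s : Set X) ⊆ (U : Set X) := by
  classical
  rcases s.eq_empty_or_nonempty with rfl | hsne
  · exact ⟨⊥, isAffineOpen_bot X, by simp⟩
  set 𝒜 := MvPolynomial.homogeneousSubmodule (Fin (n + 1)) k with h𝒜
  set T : Set (Proj 𝒜) := Set.range g.base with hT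
  have hTlc : IsLocallyClosed T := g.isLocallyClosed_range
  set Z : Set (Proj 𝒜) := closure T \ T with hZdef
  have hZcl : IsClosed Z := by
    have h := ((isLocallyClosed_tfae T).out 0 1).mp hTlc
    unfold coborder at h
    rwa [← isOpen_compl_iff]
  set Idl : Ideal (MvPolynomial (Fin (n + 1)) k) :=
    (ProjectiveSpectrum.vanishingIdeal Z ⊓ HomogeneousIdeal.irrelevant 𝒜).toIdeal with hIdl
  have hIhom : Idl.IsHomogeneous 𝒜 :=
    (ProjectiveSpectrum.vanishingIdeal Z ⊓ HomogeneousIdeal.irrelevant 𝒜).isHomogeneous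
  have hIirr : Idl ≤ (HomogeneousIdeal.irrelevant 𝒜).toIdeal := by
    rw [hIdl, HomogeneousIdeal.toIdeal_inf]; exact inf_le_right
  set S : Finset (Ideal (MvPolynomial (Fin (n + 1)) k)) :=
    s.image (fun x => (g.base x).asHomogeneousIdeal.toIdeal) with hSdef
  have hprime : ∀ p ∈ S, p.IsPrime := by
    intro p hp
    obtain ⟨x, -, rfl⟩ := Finset.mem_image.mp hp
    exact (g.base x).isPrime
  have hhom : ∀ p ∈ S, p.IsHomogeneous 𝒜 := by
    intro p hp
    obtain ⟨x, -, rfl⟩ := Finset.mem_image.mp hp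
    exact (g.base x).asHomogeneousIdeal.isHomogeneous
  have hnle : ∀ p ∈ S, ¬ Idl ≤ p := by
    intro p hp
    obtain ⟨x, -, rfl⟩ := Finset.mem_image.mp hp
    intro hle
    rw [hIdl, HomogeneousIdeal.toIdeal_inf] at hle
    rcases (g.base x).isPrime.inf_le.mp hle with h1 | h1
    · obtain ⟨s0, hs0⟩ := (ProjectiveSpectrum.isClosed_iff_zeroLocus 𝒜 Z).mp hZcl
      have hmem : (g.base x : ProjectiveSpectrum 𝒜) ∈ ProjectiveSpectrum.zeroLocus 𝒜 s0 := by
        apply (ProjectiveSpectrum.mem_zeroLocus _ _ _).mpr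
        intro a ha
        have : a ∈ ProjectiveSpectrum.vanishingIdeal Z := by
          rw [hs0]
          exact ProjectiveSpectrum.subset_vanishingIdeal_zeroLocus 𝒜 s0 ha
        exact h1 this
      rw [← hs0] at hmem
      exact hmem.2 (Set.mem_range_self x)
    · exact (g.base x).not_irrelevant_le (fun a ha => h1 ha)
  obtain ⟨d, f, hd, hf𝒜, hfI, hfS⟩ := homogeneous_prime_avoidance 𝒜 hIhom hIirr S
    (hsne.image _) hprime hhom hnle
  have hD : IsAffineOpen (Proj.basicOpen 𝒜 f) := Proj.isAffineOpen_basicOpen 𝒜 f hf𝒜 hd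
  refine ⟨g ⁻¹ᵁ Proj.basicOpen 𝒜 f, ?_, ?_⟩
  · haveI : IsAffine (Proj.basicOpen 𝒜 f).toScheme := hD
    haveI h1 : IsImmersion (g ∣_ Proj.basicOpen 𝒜 f) :=
      IsZariskiLocalAtTarget.restrict (inferInstance : IsImmersion g) _
    haveI h2 : IsClosedImmersion (g ∣_ Proj.basicOpen 𝒜 f) := by
      apply IsClosedImmersion.of_isPreimmersion
      rw [morphismRestrict_base]
      change IsClosed (Set.range ((Proj.basicOpen 𝒜 f).carrier.restrictPreimage g))
      rw [Set.range_restrictPreimage]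
      have key : (Subtype.val ⁻¹' T : Set (Proj.basicOpen 𝒜 f).1) = Subtype.val ⁻¹' closure T := by
        apply Set.Subset.antisymm (Set.preimage_mono subset_closure)
        rintro ⟨y, hy⟩ h
        simp only [Set.mem_preimage] at h ⊢
        by_contra hyT
        have hyZ : y ∈ Z := ⟨h, hyT⟩
        have hfy : f ∈ y.asHomogeneousIdeal := by
          have hfv : f ∈ ProjectiveSpectrum.vanishingIdeal Z := by
            have h' : f ∈ (ProjectiveSpectrum.vanishingIdeal Z).toIdeal ⊓
                (HomogeneousIdeal.irrelevant 𝒜).toIdeal := by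
              rw [← HomogeneousIdeal.toIdeal_inf]; exact hfI
            exact h'.1
          exact (ProjectiveSpectrum.mem_vanishingIdeal Z f).mp hfv y hyZ
        exact ((Proj.mem_basicOpen 𝒜 f y).mp hy) hfy
      rw [show Set.range g.base = T from rfl, key]
      exact isClosed_closure.preimage continuous_subtype_val
    exact isAffine_of_isAffineHom (g ∣_ Proj.basicOpen 𝒜 f)
  · intro x hx
    exact fun hmem => hfS _ (Finset.mem_image_of_mem _ hx) hmem
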